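/- arXiv:0806.0349 — 7 statements merged into one kernel-verified Lean document; each statement's English description precedes it below -/
import Mathlib

section
/- For all p, q in the closed forward light cone V_+, every point of −W_0 − Q_κ q is spacelike or lightlike separated from every point of W_0 + Q_κ p. -/
/-- Minkowski inner product on ℝ^d. -/
noncomputable def Mink (d : ℕ) (x y : Fin (d + 2) → ℝ) : ℝ :=
  x 0 * y 0 - ∑ i ∈ Finset.univ.erase (0 : Fin (d + 2)), x i * y i

/-- The closed forward light cone `V₊`. -/
noncomputable def Vplus (d : ℕ) : Set (Fin (d + 2) → ℝ) :=
  {p | Real.sqrt (∑ i ∈ Finset.univ.erase (0 : Fin (d + 2)), (p i) ^ 2) ≤ p 0}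

/-- The standard wedge `W₀ = {x : x 1 ≥ |x 0|}`. -/
def W0 (d : ℕ) : Set (Fin (d + 2) → ℝ) := {x | |x 0| ≤ x 1}

/-- The matrix `Q_κ`. -/
def Qk (d : ℕ) (κ : ℝ) (x : Fin (d + 2) → ℝ) : Fin (d + 2) → ℝ :=
  fun i => if i = 0 then κ * x 1 else if i = 1 then κ * x 0 else 0

lemma one_mem_erase (d : ℕ) : (1 : Fin (d + 2)) ∈ Finset.univ.erase (0 : Fin (d + 2)) :=
  Finset.mem_erase.mpr ⟨one_ne_zero, Finset.mem_univ _⟩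

lemma Vplus.abs_one_le {d : ℕ} {p : Fin (d + 2) → ℝ} (hp : p ∈ Vplus d) : |p 1| ≤ p 0 := by
  have h1 : (p 1) ^ 2 ≤ ∑ i ∈ Finset.univ.erase (0 : Fin (d + 2)), (p i) ^ 2 :=
    Finset.single_le_sum (f := fun i => (p i) ^ 2) (fun i _ => sq_nonneg _) (one_mem_erase d)
  calc |p 1| = Real.sqrt ((p 1) ^ 2) := (Real.sqrt_sq_eq_abs _).symm
    _ ≤ Real.sqrt (∑ i ∈ Finset.univ.erase (0 : Fin (d + 2)), (p i) ^ 2) :=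
        Real.sqrt_le_sqrt h1
    _ ≤ p 0 := hp

/-- For `p, q ∈ V₊`, every point of `−W₀ − Q_κ q` is spacelike or lightlike separated from
every point of `W₀ + Q_κ p`. -/
theorem shifted_wedges_spacelike (d : ℕ) (κ : ℝ) (hκ : 0 < κ)
    (p q : Fin (d + 2) → ℝ) (hp : p ∈ Vplus d) (hq : q ∈ Vplus d)
    (x y : Fin (d + 2) → ℝ) (hx : x ∈ W0 d) (hy : |y 0| ≤ - y 1) :
    Mink d ((x + Qk d κ p) - (y - Qk d κ q)) ((x + Qk d κ p) - (y - Qk d κ q)) ≤ 0 := by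
  set z := (x + Qk d κ p) - (y - Qk d κ q) with hz
  have hz0 : z 0 = x 0 + κ * p 1 - (y 0 - κ * q 1) := by simp [hz, Qk]
  have hz1 : z 1 = x 1 + κ * p 0 - (y 1 - κ * q 0) := by simp [hz, Qk]
  have hp1 : κ * |p 1| ≤ κ * p 0 := mul_le_mul_of_nonneg_left (Vplus.abs_one_le hp) hκ.le
  have hq1 : κ * |q 1| ≤ κ * q 0 := mul_le_mul_of_nonneg_left (Vplus.abs_one_le hq) hκ.le
  have hxa := abs_le.mp (show |x 0| ≤ x 1 from hx)
  have hya := abs_le.mp hy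
  have hpa := abs_nonneg (p 1)
  have hqa := abs_nonneg (q 1)
  have hpb := le_abs_self (p 1); have hpc := neg_abs_le (p 1)
  have hqb := le_abs_self (q 1); have hqc := neg_abs_le (q 1)
  have hp2 : κ * p 1 ≤ κ * p 0 := le_trans (mul_le_mul_of_nonneg_left hpb hκ.le) hp1
  have hp3 : -(κ * p 0) ≤ κ * p 1 := by
    have := mul_le_mul_of_nonneg_left hpc hκ.le; rw [mul_neg] at this; linarith
  have hq2 : κ * q 1 ≤ κ * q 0 := le_trans (mul_le_mul_of_nonneg_left hqb hκ.le) hq1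
  have hq3 : -(κ * q 0) ≤ κ * q 1 := by
    have := mul_le_mul_of_nonneg_left hqc hκ.le; rw [mul_neg] at this; linarith
  have h1 : z 0 ≤ z 1 := by rw [hz0, hz1]; obtain ⟨h1, h2⟩ := hxa; obtain ⟨h3, h4⟩ := hya; linarith
  have h2 : -z 1 ≤ z 0 := by rw [hz0, hz1]; obtain ⟨h1, h2⟩ := hxa; obtain ⟨h3, h4⟩ := hya; linarith
  have key : (z 0) ^ 2 ≤ (z 1) ^ 2 := sq_le_sq' h2 h1
  have hsum : (z 1) ^ 2 ≤ ∑ i ∈ Finset.univ.erase (0 : Fin (d + 2)), (z i) ^ 2 :=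
    Finset.single_le_sum (f := fun i => (z i) ^ 2) (fun i _ => sq_nonneg _) (one_mem_erase d)
  have : Mink d z z = (z 0) ^ 2 - ∑ i ∈ Finset.univ.erase (0 : Fin (d + 2)), (z i) ^ 2 := by
    simp [Mink, sq]
  linarith
end

section
/- Let H be a finite-dimensional complex inner product space, let (E_p)_{p ∈ S} be a finite family of pairwise orthogonal projections on H indexed by a finite set S ⊆ ℝ^d with Σ_p E_p = 1, and let U(x) = Σ_p e^{i⟨p,x⟩} E_p for x ∈ ℝ^d, where ⟨·,·⟩ is a (possibly indefinite) symmetric bilinear form on ℝ^d. Let Q be a linear map on ℝ^d skew-symmetric with respect to ⟨·,·⟩, i.e., ⟨q, Qp⟩ = −⟨p, Qq⟩ for all p, q. Then for every linear operator F on H, Σ_p (U(Qp) F U(Qp)^{-1}) E_p = Σ_p E_p (U(Qp) F U(Qp)^{-1}). -/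
open scoped ComplexConjugate

/-- The finite spectral unitary `U(x) = ∑_{p ∈ S} e^{i⟨p,x⟩} E_p`. -/
noncomputable def Uop {d : ℕ} {H : Type*} [NormedAddCommGroup H] [InnerProductSpace ℂ H]
    (S : Finset (Fin d → ℝ)) (E : (Fin d → ℝ) → (H →L[ℂ] H))
    (B : LinearMap.BilinForm ℝ (Fin d → ℝ)) (x : Fin d → ℝ) : H →L[ℂ] H :=
  ∑ p ∈ S, Complex.exp (Complex.I * (B p x : ℝ)) • E p

/-- The adjoint action `α_x(F) = U(x) F U(x)⁻¹` (note `U(x)⁻¹ = U(−x)`). -/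
noncomputable def adAct {d : ℕ} {H : Type*} [NormedAddCommGroup H] [InnerProductSpace ℂ H]
    (S : Finset (Fin d → ℝ)) (E : (Fin d → ℝ) → (H →L[ℂ] H))
    (B : LinearMap.BilinForm ℝ (Fin d → ℝ)) (x : Fin d → ℝ) (F : H →L[ℂ] H) : H →L[ℂ] H :=
  Uop S E B x * F * Uop S E B (-x)

/-- The warped convolution `F_Q = ∑_{p ∈ S} E_p α_{Qp}(F)`. -/
noncomputable def warp {d : ℕ} {H : Type*} [NormedAddCommGroup H] [InnerProductSpace ℂ H]
    (S : Finset (Fin d → ℝ)) (E : (Fin d → ℝ) → (H →L[ℂ] H))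
    (B : LinearMap.BilinForm ℝ (Fin d → ℝ))
    (Q : (Fin d → ℝ) →ₗ[ℝ] (Fin d → ℝ)) (F : H →L[ℂ] H) : H →L[ℂ] H :=
  ∑ p ∈ S, E p * adAct S E B (Q p) F

/-- Lemma 2.1 (finite-dimensional): the left and right warped convolutions coincide:
`∑_p α_{Qp}(F) E_p = ∑_p E_p α_{Qp}(F)`. -/
theorem warp_left_eq_right {d : ℕ} {H : Type*} [NormedAddCommGroup H]
    [InnerProductSpace ℂ H] [FiniteDimensional ℂ H]
    (S : Finset (Fin d → ℝ)) (E : (Fin d → ℝ) → (H →L[ℂ] H))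
    (hproj : ∀ p ∈ S, E p * E p = E p)
    (horth : ∀ p ∈ S, ∀ q ∈ S, p ≠ q → E p * E q = 0)
    (hsum : ∑ p ∈ S, E p = 1)
    (B : LinearMap.BilinForm ℝ (Fin d → ℝ)) (hB : ∀ x y, B x y = B y x)
    (Q : (Fin d → ℝ) →ₗ[ℝ] (Fin d → ℝ))
    (hskew : ∀ p q, B q (Q p) = - B p (Q q))
    (F : H →L[ℂ] H) :
    ∑ p ∈ S, adAct S E B (Q p) F * E p = ∑ p ∈ S, E p * adAct S E B (Q p) F := by
  have key : ∀ (x : Fin d → ℝ) (p : Fin d → ℝ), p ∈ S →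
      Uop S E B x * E p = Complex.exp (Complex.I * (B p x : ℝ)) • E p := by
    intro x p hp
    rw [Uop, Finset.sum_mul]
    rw [Finset.sum_eq_single p]
    · rw [smul_mul_assoc, hproj p hp]
    · intro q hq hqp
      rw [smul_mul_assoc, horth q hq p hp hqp, smul_zero]
    · intro h; exact absurd hp h
  have key' : ∀ (x : Fin d → ℝ) (p : Fin d → ℝ), p ∈ S →
      E p * Uop S E B x = Complex.exp (Complex.I * (B p x : ℝ)) • E p := by
    intro x p hp
    rw [Uop, Finset.mul_sum]
    rw [Finset.sum_eq_single p]
    · rw [mul_smul_comm, hproj p hp]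
    · intro q hq hqp
      rw [mul_smul_comm, horth p hp q hq (Ne.symm hqp), smul_zero]
    · intro h; exact absurd hp h
  have hBpp : ∀ p : Fin d → ℝ, B p (Q p) = 0 := by
    intro p; have := hskew p p; linarith
  have L : ∀ p ∈ S, adAct S E B (Q p) F * E p
      = ∑ q ∈ S, Complex.exp (Complex.I * (B q (Q p) : ℝ)) • (E q * F * E p) := by
    intro p hp
    rw [adAct, mul_assoc, key (-(Q p)) p hp]
    have : (B p (-(Q p)) : ℝ) = 0 := by rw [map_neg, hBpp p, neg_zero]
    rw [this]
    simp only [Complex.ofReal_zero, mul_zero, Complex.exp_zero, one_smul]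
    rw [Uop, Finset.sum_mul, Finset.sum_mul]
    refine Finset.sum_congr rfl (fun q hq => ?_)
    rw [smul_mul_assoc, smul_mul_assoc]
  have R : ∀ p ∈ S, E p * adAct S E B (Q p) F
      = ∑ q ∈ S, Complex.exp (Complex.I * (B q (-(Q p)) : ℝ)) • (E p * F * E q) := by
    intro p hp
    rw [adAct, ← mul_assoc, ← mul_assoc, key' (Q p) p hp]
    rw [hBpp p]
    simp only [Complex.ofReal_zero, mul_zero, Complex.exp_zero, one_smul]
    rw [Uop, Finset.mul_sum]
    refine Finset.sum_congr rfl (fun q hq => ?_)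
    rw [mul_smul_comm, mul_assoc]
  rw [Finset.sum_congr rfl L, Finset.sum_congr rfl R, Finset.sum_comm]
  refine Finset.sum_congr rfl (fun p hp => Finset.sum_congr rfl (fun q hq => ?_))
  congr 2
  rw [map_neg]
  push_cast
  rw [hskew q p]
  push_cast
  ring
end

section
/- In the finite-dimensional setting, the warped convolution commutes with taking adjoints: (F_Q)* = (F*)_Q, where F_Q = Σ_p E_p U(Qp) F U(Qp)^{-1}. -/
open scoped ComplexConjugate

section
variable {d : ℕ} {H : Type*} [NormedAddCommGroup H] [InnerProductSpace ℂ H]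
  [FiniteDimensional ℂ H]
  (S : Finset (Fin d → ℝ)) (E : (Fin d → ℝ) → (H →L[ℂ] H))
  (B : LinearMap.BilinForm ℝ (Fin d → ℝ))

lemma Uop_adjoint (hsa : ∀ p ∈ S, ContinuousLinearMap.adjoint (E p) = E p) (x : Fin d → ℝ) :
    ContinuousLinearMap.adjoint (Uop S E B x) = Uop S E B (-x) := by
  unfold Uop
  rw [map_sum]
  refine Finset.sum_congr rfl fun p hp => ?_
  rw [map_smulₛₗ, hsa p hp]
  congr 1
  rw [← Complex.exp_conj, map_mul, Complex.conj_I, Complex.conj_ofReal, map_neg, neg_mul]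
  push_cast
  ring_nf

lemma E_mul_Uop (hproj : ∀ p ∈ S, E p * E p = E p)
    (horth : ∀ p ∈ S, ∀ q ∈ S, p ≠ q → E p * E q = 0)
    {p : Fin d → ℝ} (hp : p ∈ S) (x : Fin d → ℝ) :
    E p * Uop S E B x = Complex.exp (Complex.I * (B p x : ℝ)) • E p := by
  unfold Uop
  rw [Finset.mul_sum, Finset.sum_eq_single p]
  · rw [mul_smul_comm, hproj p hp]
  · intro q hq hqp
    rw [mul_smul_comm, horth p hp q hq hqp.symm, smul_zero]
  · exact fun h => absurd hp h

lemma Uop_mul_E (hproj : ∀ p ∈ S, E p * E p = E p)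
    (horth : ∀ p ∈ S, ∀ q ∈ S, p ≠ q → E p * E q = 0)
    {p : Fin d → ℝ} (hp : p ∈ S) (x : Fin d → ℝ) :
    Uop S E B x * E p = Complex.exp (Complex.I * (B p x : ℝ)) • E p := by
  unfold Uop
  rw [Finset.sum_mul, Finset.sum_eq_single p]
  · rw [smul_mul_assoc, hproj p hp]
  · intro q hq hqp
    rw [smul_mul_assoc, horth q hq p hp hqp, smul_zero]
  · exact fun h => absurd hp h

lemma adAct_adjoint (hsa : ∀ p ∈ S, ContinuousLinearMap.adjoint (E p) = E p)
    (x : Fin d → ℝ) (G : H →L[ℂ] H) :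
    ContinuousLinearMap.adjoint (adAct S E B x G)
      = adAct S E B x (ContinuousLinearMap.adjoint G) := by
  unfold adAct
  rw [ContinuousLinearMap.mul_def, ContinuousLinearMap.mul_def,
    ContinuousLinearMap.adjoint_comp, ContinuousLinearMap.adjoint_comp,
    Uop_adjoint S E B hsa, Uop_adjoint S E B hsa, neg_neg]
  rfl

lemma key_comm (hproj : ∀ p ∈ S, E p * E p = E p)
    (horth : ∀ p ∈ S, ∀ q ∈ S, p ≠ q → E p * E q = 0)
    (Q : (Fin d → ℝ) →ₗ[ℝ] (Fin d → ℝ))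
    (hskew : ∀ p q, B q (Q p) = - B p (Q q))
    (G : H →L[ℂ] H) :
    ∑ p ∈ S, E p * adAct S E B (Q p) G = ∑ p ∈ S, adAct S E B (Q p) G * E p := by
  have hzero : ∀ p : Fin d → ℝ, B p (Q p) = 0 := by
    intro p; have := hskew p p; linarith
  have hL : ∀ p ∈ S, E p * adAct S E B (Q p) G
      = ∑ q ∈ S, Complex.exp (Complex.I * (B q (-(Q p)) : ℝ)) • (E p * G * E q) := by
    intro p hp
    unfold adAct
    rw [← mul_assoc, ← mul_assoc, E_mul_Uop S E B hproj horth hp, hzero]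
    simp only [Complex.ofReal_zero, mul_zero, Complex.exp_zero, one_smul]
    unfold Uop
    rw [Finset.mul_sum]
    refine Finset.sum_congr rfl fun q hq => ?_
    rw [mul_smul_comm]
  have hR : ∀ p ∈ S, adAct S E B (Q p) G * E p
      = ∑ q ∈ S, Complex.exp (Complex.I * (B q (Q p) : ℝ)) • (E q * (G * E p)) := by
    intro p hp
    unfold adAct
    rw [mul_assoc, mul_assoc, Uop_mul_E S E B hproj horth hp, map_neg]
    simp only [hzero, neg_zero, Complex.ofReal_zero, mul_zero, Complex.exp_zero, one_smul]
    unfold Uop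
    rw [Finset.sum_mul]
    refine Finset.sum_congr rfl fun q hq => ?_
    rw [smul_mul_assoc]
  rw [Finset.sum_congr rfl hL, Finset.sum_congr rfl hR]
  have hterm : ∀ p ∈ S, ∀ q ∈ S,
      Complex.exp (Complex.I * (B q (-(Q p)) : ℝ)) • (E p * G * E q)
        = Complex.exp (Complex.I * (B p (Q q) : ℝ)) • (E p * (G * E q)) := by
    intro p hp q hq
    rw [mul_assoc]
    congr 2
    rw [map_neg, hskew q p]
  rw [Finset.sum_congr rfl fun p hp => Finset.sum_congr rfl (hterm p hp)]
  exact Finset.sum_comm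
end

/-- Lemma 2.2 (finite-dimensional): the warped convolution commutes with adjoints:
`(F_Q)* = (F*)_Q`. -/
theorem warp_adjoint {d : ℕ} {H : Type*} [NormedAddCommGroup H]
    [InnerProductSpace ℂ H] [FiniteDimensional ℂ H]
    (S : Finset (Fin d → ℝ)) (E : (Fin d → ℝ) → (H →L[ℂ] H))
    (hproj : ∀ p ∈ S, E p * E p = E p)
    (horth : ∀ p ∈ S, ∀ q ∈ S, p ≠ q → E p * E q = 0)
    (hsum : ∑ p ∈ S, E p = 1)
    (hsa : ∀ p ∈ S, ContinuousLinearMap.adjoint (E p) = E p)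
    (B : LinearMap.BilinForm ℝ (Fin d → ℝ)) (hB : ∀ x y, B x y = B y x)
    (Q : (Fin d → ℝ) →ₗ[ℝ] (Fin d → ℝ))
    (hskew : ∀ p q, B q (Q p) = - B p (Q q))
    (F : H →L[ℂ] H) :
    ContinuousLinearMap.adjoint (warp S E B Q F)
      = warp S E B Q (ContinuousLinearMap.adjoint F) := by
  unfold warp
  rw [map_sum]
  have h1 : ∀ p ∈ S, ContinuousLinearMap.adjoint (E p * adAct S E B (Q p) F)
      = adAct S E B (Q p) (ContinuousLinearMap.adjoint F) * E p := by
    intro p hp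
    rw [ContinuousLinearMap.mul_def, ContinuousLinearMap.adjoint_comp,
      adAct_adjoint S E B hsa, hsa p hp]
    rfl
  rw [Finset.sum_congr rfl h1, ← key_comm S E B hproj horth Q hskew]
end

section
/- In the finite-dimensional setting, warped convolutions compose additively: (F_{Q_1})_{Q_2} = F_{Q_1 + Q_2} for any two linear maps Q_1, Q_2 on ℝ^d that are skew-symmetric with respect to the bilinear form ⟨·,·⟩. -/
open scoped ComplexConjugate

section Aux

variable {d : ℕ} {H : Type*} [NormedAddCommGroup H] [InnerProductSpace ℂ H]
  (S : Finset (Fin d → ℝ)) (E : (Fin d → ℝ) → (H →L[ℂ] H))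
  (B : LinearMap.BilinForm ℝ (Fin d → ℝ))

lemma Emul_Uop (hproj : ∀ p ∈ S, E p * E p = E p)
    (horth : ∀ p ∈ S, ∀ q ∈ S, p ≠ q → E p * E q = 0)
    {q : Fin d → ℝ} (hq : q ∈ S) (x : Fin d → ℝ) :
    E q * Uop S E B x = Complex.exp (Complex.I * (B q x : ℝ)) • E q := by
  unfold Uop
  rw [Finset.mul_sum, Finset.sum_eq_single q]
  · rw [mul_smul_comm, hproj q hq]
  · intro p hp hne
    rw [mul_smul_comm, horth q hq p hp (Ne.symm hne), smul_zero]
  · intro h; exact absurd hq h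

lemma Uop_mul (hproj : ∀ p ∈ S, E p * E p = E p)
    (horth : ∀ p ∈ S, ∀ q ∈ S, p ≠ q → E p * E q = 0)
    (x y : Fin d → ℝ) :
    Uop S E B x * Uop S E B y = Uop S E B (x + y) := by
  conv_lhs => rw [Uop, Finset.sum_mul]
  conv_rhs => rw [Uop]
  refine Finset.sum_congr rfl fun p hp => ?_
  rw [smul_mul_assoc, Emul_Uop S E B hproj horth hp, smul_smul, ← Complex.exp_add,
    map_add, Complex.ofReal_add, mul_add]

lemma collapse (hproj : ∀ p ∈ S, E p * E p = E p)
    (horth : ∀ p ∈ S, ∀ q ∈ S, p ≠ q → E p * E q = 0)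
    {q : Fin d → ℝ} (hq : q ∈ S) (g : (Fin d → ℝ) → (H →L[ℂ] H)) :
    E q * ∑ p ∈ S, E p * g p = E q * g q := by
  rw [Finset.mul_sum, Finset.sum_eq_single q]
  · rw [← mul_assoc, hproj q hq]
  · intro p hp hne
    rw [← mul_assoc, horth q hq p hp (Ne.symm hne), zero_mul]
  · intro h; exact absurd hq h

end Aux

/-- Warped convolutions compose additively: `(F_{Q₁})_{Q₂} = F_{Q₁ + Q₂}`. -/
theorem warp_warp {d : ℕ} {H : Type*} [NormedAddCommGroup H]
    [InnerProductSpace ℂ H] [FiniteDimensional ℂ H]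
    (S : Finset (Fin d → ℝ)) (E : (Fin d → ℝ) → (H →L[ℂ] H))
    (hproj : ∀ p ∈ S, E p * E p = E p)
    (horth : ∀ p ∈ S, ∀ q ∈ S, p ≠ q → E p * E q = 0)
    (hsum : ∑ p ∈ S, E p = 1)
    (B : LinearMap.BilinForm ℝ (Fin d → ℝ)) (hB : ∀ x y, B x y = B y x)
    (Q₁ Q₂ : (Fin d → ℝ) →ₗ[ℝ] (Fin d → ℝ))
    (hskew₁ : ∀ p q, B q (Q₁ p) = - B p (Q₁ q))
    (hskew₂ : ∀ p q, B q (Q₂ p) = - B p (Q₂ q))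
    (F : H →L[ℂ] H) :
    warp S E B Q₂ (warp S E B Q₁ F) = warp S E B (Q₁ + Q₂) F := by
  have h1 : ∀ q, B q (Q₁ q) = 0 := fun q => by have := hskew₁ q q; linarith
  have h2 : ∀ q, B q (Q₂ q) = 0 := fun q => by have := hskew₂ q q; linarith
  have key : ∀ (x : Fin d → ℝ), ∀ q ∈ S, B q x = 0 → E q * Uop S E B x = E q := by
    intro x q hq hx
    rw [Emul_Uop S E B hproj horth hq, hx]
    simp
  unfold warp adAct
  refine Finset.sum_congr rfl fun q hq => ?_
  have hq12 : B q ((Q₁ + Q₂) q) = 0 := by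
    simp only [LinearMap.add_apply, map_add, h1, h2, add_zero]
  calc E q * (Uop S E B (Q₂ q) *
        (∑ p ∈ S, E p * (Uop S E B (Q₁ p) * F * Uop S E B (-(Q₁ p)))) *
        Uop S E B (-(Q₂ q)))
      = (E q * Uop S E B (Q₂ q)) *
        (∑ p ∈ S, E p * (Uop S E B (Q₁ p) * F * Uop S E B (-(Q₁ p)))) *
        Uop S E B (-(Q₂ q)) := by simp only [mul_assoc]
    _ = (E q * ∑ p ∈ S, E p * (Uop S E B (Q₁ p) * F * Uop S E B (-(Q₁ p)))) *
        Uop S E B (-(Q₂ q)) := by rw [key _ q hq (h2 q)]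
    _ = (E q * (Uop S E B (Q₁ q) * F * Uop S E B (-(Q₁ q)))) * Uop S E B (-(Q₂ q)) := by
        rw [collapse S E hproj horth hq]
    _ = ((E q * Uop S E B (Q₁ q)) * F) * (Uop S E B (-(Q₁ q)) * Uop S E B (-(Q₂ q))) := by
        simp only [mul_assoc]
    _ = E q * F * Uop S E B (-(Q₁ q) + -(Q₂ q)) := by
        rw [key _ q hq (h1 q), Uop_mul S E B hproj horth]
    _ = (E q * Uop S E B ((Q₁ + Q₂) q)) * F * Uop S E B (-((Q₁ + Q₂) q)) := by
        rw [key _ q hq hq12]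
        congr 2
        simp only [LinearMap.add_apply]
        abel
    _ = E q * (Uop S E B ((Q₁ + Q₂) q) * F * Uop S E B (-((Q₁ + Q₂) q))) := by
        simp only [mul_assoc]
end

section
/- Finite-dimensional version of Lemma 2.3: if F and G are linear operators on H such that α_{Qp}(F) commutes with α_{−Qq}(G) for all p, q ∈ S, then F_Q commutes with G_{−Q}, i.e., F_Q G_{−Q} = G_{−Q} F_Q. -/
open scoped ComplexConjugate

section Aux

variable {d : ℕ} {H : Type*} [NormedAddCommGroup H] [InnerProductSpace ℂ H]
variable (S : Finset (Fin d → ℝ)) (E : (Fin d → ℝ) → (H →L[ℂ] H))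
variable (B : LinearMap.BilinForm ℝ (Fin d → ℝ))

lemma UmulE (hproj : ∀ p ∈ S, E p * E p = E p)
    (horth : ∀ p ∈ S, ∀ q ∈ S, p ≠ q → E p * E q = 0)
    {r : Fin d → ℝ} (hr : r ∈ S) (x : Fin d → ℝ) :
    Uop S E B x * E r = Complex.exp (Complex.I * (B r x : ℝ)) • E r := by
  unfold Uop
  rw [Finset.sum_mul, Finset.sum_eq_single r]
  · rw [smul_mul_assoc, hproj r hr]
  · intro b hb hbr
    rw [smul_mul_assoc, horth b hb r hr hbr, smul_zero]
  · intro h; exact absurd hr h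

lemma EmulU (hproj : ∀ p ∈ S, E p * E p = E p)
    (horth : ∀ p ∈ S, ∀ q ∈ S, p ≠ q → E p * E q = 0)
    {r : Fin d → ℝ} (hr : r ∈ S) (x : Fin d → ℝ) :
    E r * Uop S E B x = Complex.exp (Complex.I * (B r x : ℝ)) • E r := by
  unfold Uop
  rw [Finset.mul_sum, Finset.sum_eq_single r]
  · rw [mul_smul_comm, hproj r hr]
  · intro b hb hbr
    rw [mul_smul_comm, horth r hr b hb (Ne.symm hbr), smul_zero]
  · intro h; exact absurd hr h

lemma UmulE' (hproj : ∀ p ∈ S, E p * E p = E p)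
    (horth : ∀ p ∈ S, ∀ q ∈ S, p ≠ q → E p * E q = 0)
    {r : Fin d → ℝ} (hr : r ∈ S) (x : Fin d → ℝ) (W : H →L[ℂ] H) :
    Uop S E B x * (E r * W) = Complex.exp (Complex.I * (B r x : ℝ)) • (E r * W) := by
  rw [← mul_assoc, UmulE S E B hproj horth hr x, smul_mul_assoc]

lemma EmulU' (hproj : ∀ p ∈ S, E p * E p = E p)
    (horth : ∀ p ∈ S, ∀ q ∈ S, p ≠ q → E p * E q = 0)
    {r : Fin d → ℝ} (hr : r ∈ S) (x : Fin d → ℝ) (W : H →L[ℂ] H) :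
    E r * (Uop S E B x * W) = Complex.exp (Complex.I * (B r x : ℝ)) • (E r * W) := by
  rw [← mul_assoc, EmulU S E B hproj horth hr x, smul_mul_assoc]

lemma sandwich (hproj : ∀ p ∈ S, E p * E p = E p)
    (horth : ∀ p ∈ S, ∀ q ∈ S, p ≠ q → E p * E q = 0)
    {a s r : Fin d → ℝ} (ha : a ∈ S) (hs : s ∈ S) (hr : r ∈ S)
    (x y : Fin d → ℝ) (F G : H →L[ℂ] H) :
    E a * (adAct S E B x F * (E s * (adAct S E B y G * E r)))
      = Complex.exp (Complex.I * (((B a x - B s x) + (B s y - B r y)) : ℝ))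
          • (E a * (F * (E s * (G * E r)))) := by
  unfold adAct
  simp only [mul_assoc]
  rw [UmulE S E B hproj horth hr (-y)]
  simp only [mul_smul_comm]
  rw [EmulU' S E B hproj horth hs y (G * E r)]
  simp only [mul_smul_comm]
  rw [UmulE' S E B hproj horth hs (-x) (G * E r)]
  simp only [mul_smul_comm]
  rw [EmulU' S E B hproj horth ha x (F * (E s * (G * E r)))]
  rw [smul_smul, smul_smul, smul_smul, ← Complex.exp_add, ← Complex.exp_add, ← Complex.exp_add]
  congr 2
  push_cast [map_neg]
  ring

end Aux

/-- Lemma 2.3 (finite-dimensional): if `α_{Qp}(F)` commutes with `α_{−Qq}(G)` for all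
`p, q ∈ S`, then `F_Q` commutes with `G_{−Q}`. -/
theorem warp_commute {d : ℕ} {H : Type*} [NormedAddCommGroup H]
    [InnerProductSpace ℂ H] [FiniteDimensional ℂ H]
    (S : Finset (Fin d → ℝ)) (E : (Fin d → ℝ) → (H →L[ℂ] H))
    (hproj : ∀ p ∈ S, E p * E p = E p)
    (horth : ∀ p ∈ S, ∀ q ∈ S, p ≠ q → E p * E q = 0)
    (hsum : ∑ p ∈ S, E p = 1)
    (B : LinearMap.BilinForm ℝ (Fin d → ℝ)) (hB : ∀ x y, B x y = B y x)
    (Q : (Fin d → ℝ) →ₗ[ℝ] (Fin d → ℝ))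
    (hskew : ∀ p q, B q (Q p) = - B p (Q q))
    (F G : H →L[ℂ] H)
    (hcomm : ∀ p ∈ S, ∀ q ∈ S,
      adAct S E B (Q p) F * adAct S E B (-(Q q)) G
        = adAct S E B (-(Q q)) G * adAct S E B (Q p) F) :
    warp S E B Q F * warp S E B (-Q) G = warp S E B (-Q) G * warp S E B Q F := by

  -- abbreviations
  have hzero : ∀ p, B p (Q p) = 0 := by
    intro p
    have := hskew p p
    linarith
  -- key middle-sum identity
  have key : ∀ a ∈ S, ∀ r ∈ S,
      ∑ q ∈ S, E a * (adAct S E B (Q a) F * (E q * (adAct S E B (-(Q q)) G * E r)))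
        = ∑ p ∈ S, E a * (adAct S E B (-(Q a)) G * (E p * (adAct S E B (Q p) F * E r))) := by
    intro a ha r hr
    have expand : ∀ A C : H →L[ℂ] H,
        ∑ s ∈ S, E a * (A * (E s * (C * E r))) = E a * (A * (C * E r)) := by
      intro A C
      rw [← Finset.mul_sum, ← Finset.mul_sum, ← Finset.sum_mul, hsum, one_mul]
    have mid : ∑ s ∈ S, E a * (adAct S E B (Q a) F * (E s * (adAct S E B (-(Q r)) G * E r)))
        = ∑ s ∈ S, E a * (adAct S E B (-(Q r)) G * (E s * (adAct S E B (Q a) F * E r))) := by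
      rw [expand, expand]
      congr 1
      rw [← mul_assoc, hcomm a ha r hr, mul_assoc]
    calc ∑ q ∈ S, E a * (adAct S E B (Q a) F * (E q * (adAct S E B (-(Q q)) G * E r)))
        = ∑ s ∈ S, E a * (adAct S E B (Q a) F * (E s * (adAct S E B (-(Q r)) G * E r))) := by
          apply Finset.sum_congr rfl
          intro q hq
          rw [sandwich S E B hproj horth ha hq hr (Q a) (-(Q q)) F G,
            sandwich S E B hproj horth ha hq hr (Q a) (-(Q r)) F G]
          congr 3
          have h1 := hzero q
          have h2 := hzero r
          have h3 := hskew q r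
          simp only [map_neg]
          norm_cast
          linarith
      _ = ∑ s ∈ S, E a * (adAct S E B (-(Q r)) G * (E s * (adAct S E B (Q a) F * E r))) := mid
      _ = ∑ p ∈ S, E a * (adAct S E B (-(Q a)) G * (E p * (adAct S E B (Q p) F * E r))) := by
          apply Finset.sum_congr rfl
          intro p hp
          rw [sandwich S E B hproj horth ha hp hr (-(Q r)) (Q a) G F,
            sandwich S E B hproj horth ha hp hr (-(Q a)) (Q p) G F]
          congr 3
          have h1 := hzero a
          have h2 := hzero p
          have h3 := hskew p r
          have h4 := hskew a r
          simp only [map_neg]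
          norm_cast
          linarith
  -- expansions of both sides
  have expandL : warp S E B Q F * warp S E B (-Q) G
      = ∑ r ∈ S, ∑ q ∈ S, ∑ a ∈ S,
          E a * (adAct S E B (Q a) F * (E q * (adAct S E B (-(Q q)) G * E r))) := by
    calc warp S E B Q F * warp S E B (-Q) G
        = warp S E B Q F * (warp S E B (-Q) G * ∑ r ∈ S, E r) := by rw [hsum, mul_one]
      _ = _ := by
          unfold warp
          simp only [Finset.sum_mul, Finset.mul_sum, LinearMap.neg_apply, mul_assoc]
  have expandR : warp S E B (-Q) G * warp S E B Q F
      = ∑ r ∈ S, ∑ p ∈ S, ∑ a ∈ S,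
          E a * (adAct S E B (-(Q a)) G * (E p * (adAct S E B (Q p) F * E r))) := by
    calc warp S E B (-Q) G * warp S E B Q F
        = warp S E B (-Q) G * (warp S E B Q F * ∑ r ∈ S, E r) := by rw [hsum, mul_one]
      _ = _ := by
          unfold warp
          simp only [Finset.sum_mul, Finset.mul_sum, LinearMap.neg_apply, mul_assoc]
  rw [expandL, expandR]
  apply Finset.sum_congr rfl
  intro r hr
  rw [Finset.sum_comm]
  rw [show (∑ p ∈ S, ∑ a ∈ S,
      E a * (adAct S E B (-(Q a)) G * (E p * (adAct S E B (Q p) F * E r))))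
    = ∑ a ∈ S, ∑ p ∈ S,
      E a * (adAct S E B (-(Q a)) G * (E p * (adAct S E B (Q p) F * E r))) from Finset.sum_comm]
  apply Finset.sum_congr rfl
  intro a ha
  exact key a ha r hr
end

section
/- Finite-dimensional version of Lemma 2.4 (covariance): let V be a unitary operator on H and Λ an invertible linear map on ℝ^d preserving ⟨·,·⟩ such that V U(x) V^{-1} = U(Λx) for all x ∈ ℝ^d and Λ S = S. Then for any operator F on H, V F_Q V^{-1} = (V F V^{-1})_{Λ Q Λ^{-1}}. -/
open scoped ComplexConjugate

open scoped InnerProductSpace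

/-- The character `x ↦ exp(i ℓ x)` as a monoid hom from `Multiplicative (Fin d → ℝ)` to `ℂ`. -/
noncomputable def charOf {d : ℕ} (ℓ : (Fin d → ℝ) →ₗ[ℝ] ℝ) :
    Multiplicative (Fin d → ℝ) →* ℂ where
  toFun x := Complex.exp (Complex.I * ((ℓ (Multiplicative.toAdd x) : ℝ) : ℂ))
  map_one' := by simp
  map_mul' x y := by
    show Complex.exp (Complex.I * ((ℓ (Multiplicative.toAdd x + Multiplicative.toAdd y) : ℝ) : ℂ)) = _
    rw [map_add, Complex.ofReal_add, mul_add, Complex.exp_add]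

lemma charOf_injective {d : ℕ} : Function.Injective (charOf (d := d)) := by
  intro ℓ ℓ' h
  refine LinearMap.ext fun x => ?_
  by_contra hne
  set c : ℝ := ℓ x - ℓ' x with hc
  have hc0 : c ≠ 0 := sub_ne_zero.mpr hne
  set t : ℝ := Real.pi / c with ht
  have hx := DFunLike.congr_fun h (Multiplicative.ofAdd (t • x))
  simp only [charOf, MonoidHom.coe_mk, OneHom.coe_mk, toAdd_ofAdd] at hx
  rw [Complex.exp_eq_exp_iff_exists_int] at hx
  obtain ⟨n, hn⟩ := hx
  rw [map_smul, smul_eq_mul, map_smul, smul_eq_mul] at hn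
  have h2 : ((t * ℓ x : ℝ) : ℂ) = ((t * ℓ' x + n * (2 * Real.pi) : ℝ) : ℂ) := by
    push_cast at hn ⊢
    linear_combination (-Complex.I) * hn + ((t : ℂ) * (ℓ x : ℝ) - (t : ℂ) * (ℓ' x : ℝ) - 2 * (n : ℂ) * (Real.pi : ℝ)) * Complex.I_sq
  have him2 : t * c = n * (2 * Real.pi) := by
    have := Complex.ofReal_inj.mp h2
    rw [hc]; ring_nf; ring_nf at this; linarith
  rw [ht, div_mul_cancel₀ _ hc0] at him2
  have h3 : (2 * n : ℝ) = 1 := by nlinarith [Real.pi_pos]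
  have h4 : (2 * n : ℤ) = 1 := by exact_mod_cast h3
  omega

lemma charOf_linIndep {d : ℕ} :
    LinearIndependent ℂ (fun ℓ : (Fin d → ℝ) →ₗ[ℝ] ℝ => ⇑(charOf ℓ)) :=
  (linearIndependent_monoidHom (Multiplicative (Fin d → ℝ)) ℂ).comp charOf charOf_injective

open Finset in
open scoped Classical in
lemma fiber_sum_zero {d : ℕ} {H : Type*} [NormedAddCommGroup H] [InnerProductSpace ℂ H]
    (S : Finset (Fin d → ℝ)) (B : LinearMap.BilinForm ℝ (Fin d → ℝ))
    (A : (Fin d → ℝ) → (H →L[ℂ] H))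
    (hA : ∀ x, ∑ q ∈ S, Complex.exp (Complex.I * ((B q x : ℝ) : ℂ)) • A q = 0)
    (v : (Fin d → ℝ) →ₗ[ℝ] ℝ) :
    ∑ q ∈ S.filter (fun q => B q = v), A q = 0 := by
  classical
  have key : ∀ u w : H, ⟪u, (∑ q ∈ S.filter (fun q => B q = v), A q) w⟫_ℂ = 0 := by
    intro u w
    set g : ((Fin d → ℝ) →ₗ[ℝ] ℝ) → ℂ :=
      fun v' => ∑ q ∈ S.filter (fun q => B q = v'), ⟪u, A q w⟫_ℂ with hg
    have hz : ∑ v' ∈ S.image (fun q => (B q : (Fin d → ℝ) →ₗ[ℝ] ℝ)),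
        g v' • ⇑(charOf v') = 0 := by
      funext y
      simp only [Finset.sum_apply, Pi.smul_apply, Pi.zero_apply, smul_eq_mul, hg,
        Finset.sum_mul]
      have step1 : ∀ v' ∈ S.image (fun q => (B q : (Fin d → ℝ) →ₗ[ℝ] ℝ)),
          ∑ q ∈ S.filter (fun q => B q = v'), ⟪u, (A q) w⟫_ℂ * (charOf v') y
            = ∑ q ∈ S.filter (fun q => B q = v'),
                ⟪u, (A q) w⟫_ℂ * Complex.exp (Complex.I * ((B q (Multiplicative.toAdd y) : ℝ) : ℂ)) := by
        intro v' _
        refine Finset.sum_congr rfl fun q hq => ?_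
        rw [(Finset.mem_filter.mp hq).2]
        rfl
      rw [Finset.sum_congr rfl step1]
      rw [Finset.sum_fiberwise_of_maps_to (g := fun q => (B q : (Fin d → ℝ) →ₗ[ℝ] ℝ))
        (fun q hq => Finset.mem_image_of_mem _ hq)
        (fun q => ⟪u, (A q) w⟫_ℂ * Complex.exp (Complex.I * ((B q (Multiplicative.toAdd y) : ℝ) : ℂ)))]
      have := congrArg (fun T : H →L[ℂ] H => ⟪u, T w⟫_ℂ) (hA (Multiplicative.toAdd y))
      simp only [ContinuousLinearMap.sum_apply, ContinuousLinearMap.smul_apply, inner_sum,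
        inner_smul_right, ContinuousLinearMap.zero_apply, inner_zero_right] at this
      rw [← this]
      exact Finset.sum_congr rfl fun q _ => mul_comm _ _
    have hli := linearIndependent_iff'.mp (charOf_linIndep (d := d))
        (S.image (fun q => (B q : (Fin d → ℝ) →ₗ[ℝ] ℝ))) g hz
    by_cases hv : v ∈ S.image (fun q => (B q : (Fin d → ℝ) →ₗ[ℝ] ℝ))
    · have := hli v hv
      rw [hg] at this
      rw [← this]
      simp [inner_sum]
    · have : S.filter (fun q => B q = v) = ∅ := by
        rw [Finset.filter_eq_empty_iff]
        intro q hq hq'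
        exact hv (Finset.mem_image.mpr ⟨q, hq, hq'⟩)
      simp [this]
  refine ContinuousLinearMap.ext fun w => ?_
  rw [ContinuousLinearMap.zero_apply, ← inner_self_eq_zero (𝕜 := ℂ)]
  exact key ((∑ q ∈ S.filter (fun q => B q = v), A q) w) w

open scoped Classical in
lemma group_sum_zero {d : ℕ} {H : Type*} [NormedAddCommGroup H] [InnerProductSpace ℂ H]
    (S : Finset (Fin d → ℝ)) (B : LinearMap.BilinForm ℝ (Fin d → ℝ))
    (A W : (Fin d → ℝ) → (H →L[ℂ] H))
    (hA : ∀ x, ∑ q ∈ S, Complex.exp (Complex.I * ((B q x : ℝ) : ℂ)) • A q = 0)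
    (hW : ∀ q ∈ S, ∀ q' ∈ S, (B q : (Fin d → ℝ) →ₗ[ℝ] ℝ) = B q' → W q = W q') :
    ∑ q ∈ S, A q * W q = 0 := by
  rw [← Finset.sum_fiberwise_of_maps_to (g := fun q => (B q : (Fin d → ℝ) →ₗ[ℝ] ℝ))
    (fun q hq => Finset.mem_image_of_mem _ hq) (fun q => A q * W q)]
  refine Finset.sum_eq_zero fun v hv => ?_
  obtain ⟨q₀, hq₀, hq₀v⟩ := Finset.mem_image.mp hv
  have hcg : ∀ q ∈ S.filter (fun q => B q = v), A q * W q = A q * W q₀ := fun q hq => by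
    rw [hW q (Finset.mem_filter.mp hq).1 q₀ hq₀ (by rw [(Finset.mem_filter.mp hq).2, hq₀v])]
  rw [Finset.sum_congr rfl hcg, ← Finset.sum_mul, fiber_sum_zero S B A hA v, zero_mul]

open scoped Classical in
/-- Lemma 2.4 (finite-dimensional covariance): if `V` is unitary, `Λ` preserves the
bilinear form with `Λ S = S` and `V U(x) V⁻¹ = U(Λ x)`, then
`V F_Q V⁻¹ = (V F V⁻¹)_{Λ Q Λ⁻¹}`. -/
theorem warp_covariance {d : ℕ} {H : Type*} [NormedAddCommGroup H]
    [InnerProductSpace ℂ H] [FiniteDimensional ℂ H]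
    (S : Finset (Fin d → ℝ)) (E : (Fin d → ℝ) → (H →L[ℂ] H))
    (hproj : ∀ p ∈ S, E p * E p = E p)
    (horth : ∀ p ∈ S, ∀ q ∈ S, p ≠ q → E p * E q = 0)
    (hsum : ∑ p ∈ S, E p = 1)
    (B : LinearMap.BilinForm ℝ (Fin d → ℝ)) (hB : ∀ x y, B x y = B y x)
    (Q : (Fin d → ℝ) →ₗ[ℝ] (Fin d → ℝ))
    (hskew : ∀ p q, B q (Q p) = - B p (Q q))
    (Λ : (Fin d → ℝ) ≃ₗ[ℝ] (Fin d → ℝ))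
    (hΛB : ∀ x y, B (Λ x) (Λ y) = B x y)
    (hΛS : S.image (fun p => Λ p) = S)
    (V : H →L[ℂ] H)
    (hV₁ : ContinuousLinearMap.adjoint V * V = 1)
    (hV₂ : V * ContinuousLinearMap.adjoint V = 1)
    (hcov : ∀ x, V * Uop S E B x * ContinuousLinearMap.adjoint V = Uop S E B (Λ x))
    (F : H →L[ℂ] H) :
    V * warp S E B Q F * ContinuousLinearMap.adjoint V
      = warp S E B (Λ.toLinearMap ∘ₗ Q ∘ₗ Λ.symm.toLinearMap)
          (V * F * ContinuousLinearMap.adjoint V) := by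
  set Vd := ContinuousLinearMap.adjoint V with hVd
  set G := V * F * Vd with hG
  have hVV : ∀ z : H →L[ℂ] H, Vd * (V * z) = z := fun z => by
    rw [← mul_assoc, hV₁, one_mul]
  have hΛinj : ∀ x ∈ S, ∀ y ∈ S, Λ x = Λ y → x = y := fun x _ y _ h => Λ.injective h
  set X : (Fin d → ℝ) → (H →L[ℂ] H) :=
    fun q => Uop S E B (Λ (Q q)) * G * Uop S E B (-(Λ (Q q))) with hX
  have hreindex : ∀ f : (Fin d → ℝ) → (H →L[ℂ] H),
      ∑ p ∈ S, f p = ∑ q ∈ S, f (Λ q) := by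
    intro f
    have h : ∑ p ∈ S.image (fun p => Λ p), f p = ∑ q ∈ S, f (Λ q) :=
      Finset.sum_image hΛinj
    rw [hΛS] at h
    exact h
  have hlhs : V * warp S E B Q F * Vd = ∑ q ∈ S, (V * E q * Vd) * X q := by
    rw [warp, Finset.mul_sum, Finset.sum_mul]
    refine Finset.sum_congr rfl fun q hq => ?_
    simp only [hX]
    rw [adAct, ← hcov (Q q)]
    have h2 := hcov (-(Q q))
    rw [map_neg] at h2
    rw [← h2]
    simp only [hG, mul_assoc, hVV]
  have hrhs : warp S E B (Λ.toLinearMap ∘ₗ Q ∘ₗ Λ.symm.toLinearMap) G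
      = ∑ q ∈ S, E (Λ q) * X q := by
    rw [warp, hreindex (fun p =>
      E p * adAct S E B ((Λ.toLinearMap ∘ₗ Q ∘ₗ Λ.symm.toLinearMap) p) G)]
    refine Finset.sum_congr rfl fun q hq => ?_
    simp only [hX]
    rw [adAct]
    simp only [LinearMap.comp_apply, LinearEquiv.coe_coe, LinearEquiv.symm_apply_apply]
  have hUΛ : ∀ x, Uop S E B (Λ x)
      = ∑ q ∈ S, Complex.exp (Complex.I * ((B q x : ℝ) : ℂ)) • E (Λ q) := by
    intro x
    rw [Uop, hreindex (fun p => Complex.exp (Complex.I * ((B p (Λ x) : ℝ) : ℂ)) • E p)]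
    exact Finset.sum_congr rfl fun q _ => by rw [hΛB q x]
  have hA : ∀ x, ∑ q ∈ S,
      Complex.exp (Complex.I * ((B q x : ℝ) : ℂ)) • (V * E q * Vd - E (Λ q)) = 0 := by
    intro x
    have hcalc : ∑ q ∈ S,
        Complex.exp (Complex.I * ((B q x : ℝ) : ℂ)) • (V * E q * Vd - E (Λ q))
        = (V * Uop S E B x * Vd) - Uop S E B (Λ x) := by
      rw [hUΛ x, Uop, Finset.mul_sum, Finset.sum_mul, ← Finset.sum_sub_distrib]
      refine Finset.sum_congr rfl fun q hq => ?_
      rw [smul_sub, mul_smul_comm, smul_mul_assoc]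
    rw [hcalc, hcov x, sub_self]
  have hW : ∀ q ∈ S, ∀ q' ∈ S, (B q : (Fin d → ℝ) →ₗ[ℝ] ℝ) = B q' → X q = X q' := by
    intro q _ q' _ hbq
    have hBr : ∀ r, B r (Λ (Q q)) = B r (Λ (Q q')) := by
      intro r
      have e1 : ∀ s : Fin d → ℝ, B r (Λ (Q s)) = - B s (Q (Λ.symm r)) := by
        intro s
        conv_lhs => rw [← Λ.apply_symm_apply r]
        rw [hΛB, hskew s (Λ.symm r)]
      rw [e1 q, e1 q', DFunLike.congr_fun hbq (Q (Λ.symm r))]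
    have hU1 : Uop S E B (Λ (Q q)) = Uop S E B (Λ (Q q')) := by
      rw [Uop, Uop]
      exact Finset.sum_congr rfl fun r _ => by rw [hBr r]
    have hU2 : Uop S E B (-(Λ (Q q))) = Uop S E B (-(Λ (Q q'))) := by
      rw [Uop, Uop]
      refine Finset.sum_congr rfl fun r _ => by rw [map_neg (B r), map_neg (B r), hBr r]
    simp only [hX, hU1, hU2]
  rw [hlhs, hrhs, ← sub_eq_zero, ← Finset.sum_sub_distrib]
  rw [Finset.sum_congr rfl fun q _ => (sub_mul (V * E q * Vd) (E (Λ q)) (X q)).symm]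
  exact group_sum_zero S B (fun q => V * E q * Vd - E (Λ q)) X hA hW
end

section
/- Velocity-support separation: let v = (1, v⃗) and v' = (1, v⃗') in ℝ^d with v' − v lying in the interior of the standard wedge W_0. Then for every t < 0, every point of W_0 + t v is spacelike separated from every point of (−W_0) + t v'. -/
/-- Velocity-support separation: if `v = (1, v⃗)`, `v' = (1, v⃗')` with `v' − v` in the
interior of `W₀`, then for `t < 0` every point of `W₀ + t v` is spacelike separated from
every point of `−W₀ + t v'`. -/
theorem velocity_support_spacelike (d : ℕ)
    (v v' : Fin (d + 2) → ℝ) (hv : v 0 = 1) (hv' : v' 0 = 1)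
    (hint : |(v' - v) 0| < (v' - v) 1)
    (t : ℝ) (ht : t < 0)
    (a b : Fin (d + 2) → ℝ) (ha : a ∈ W0 d) (hb : |b 0| ≤ - b 1) :
    Mink d ((a + t • v) - (b + t • v')) ((a + t • v) - (b + t • v')) < 0 := by
  set x := (a + t • v) - (b + t • v') with hx
  simp only [Pi.sub_apply] at hint
  have ha' : |a 0| ≤ a 1 := ha
  have ha2 := abs_le.mp ha'
  have hb2 := abs_le.mp hb
  have hint2 := abs_lt.mp hint
  have h0 : x 0 = a 0 - b 0 := by
    simp [hx, hv, hv']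
  have h1 : x 1 = a 1 - b 1 + t * (v 1 - v' 1) := by
    simp [hx]; ring
  have habs : |x 0| < x 1 := by
    rw [h0, h1, abs_lt]
    constructor <;> nlinarith
  have hone : (1 : Fin (d + 2)) ∈ Finset.univ.erase (0 : Fin (d + 2)) := by
    refine Finset.mem_erase.mpr ⟨?_, Finset.mem_univ _⟩
    exact Fin.ne_of_val_ne (by simp)
  have hsum : x 1 * x 1 ≤ ∑ i ∈ Finset.univ.erase (0 : Fin (d + 2)), x i * x i :=
    Finset.single_le_sum (f := fun i => x i * x i) (fun i _ => mul_self_nonneg _) hone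
  unfold Mink
  nlinarith [abs_nonneg (x 0), abs_mul_abs_self (x 0)]
end
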